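/- Let N be a Nijenhuis operator on a pre-Lie algebra (g,·). Then for all positive integers j,k and all x,y ∈ g: N^j(x)·N^k(y) − N^k(N^j(x)·y) − N^j(x·N^k(y)) + N^{j+k}(x·y) = 0. If moreover N is invertible, the same identity holds for all integers j,k ∈ ℤ (where N^i for negative i denotes the corresponding power of the inverse). -/

import Mathlib

set_option linter.unusedSectionVars false
set_option maxHeartbeats 1000000

variable {K : Type*} [Field K] [CharZero K]
variable {g : Type*} [AddCommGroup g] [Module K g]

/-- The pre-Lie identity for a bilinear multiplication. -/
def IsPreLie (mul : g →ₗ[K] g →ₗ[K] g) : Prop :=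
  ∀ x y z : g, mul (mul x y) z - mul x (mul y z) = mul (mul y x) z - mul y (mul x z)

/-- The deformed product `x ·_N y = N(x)·y + x·N(y) − N(x·y)`. -/
def nijDeform (mul : g →ₗ[K] g →ₗ[K] g) (N : g →ₗ[K] g) (x y : g) : g :=
  mul (N x) y + mul x (N y) - N (mul x y)

/-- A Nijenhuis operator on a pre-Lie algebra. -/
def IsNijenhuis (mul : g →ₗ[K] g →ₗ[K] g) (N : g →ₗ[K] g) : Prop :=
  ∀ x y : g, mul (N x) (N y) = N (nijDeform mul N x y)

private lemma nij_key (mul : g →ₗ[K] g →ₗ[K] g) (N : Module.End K g)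
    (hN : IsNijenhuis mul N) (a b : g) :
    mul (N a) (N b) - N (mul (N a) b) - N (mul a (N b)) + N (N (mul a b)) = 0 := by
  have h := hN a b
  simp only [nijDeform, map_add, map_sub] at h
  linear_combination (norm := module) h

private lemma pow_succ_apply (N : Module.End K g) (k : ℕ) (z : g) :
    (N ^ (k + 1)) z = N ((N ^ k) z) := by
  rw [pow_succ', Module.End.mul_apply]

private lemma pow_comm_apply (N : Module.End K g) (k : ℕ) (z : g) :
    (N ^ k) (N z) = N ((N ^ k) z) := by
  rw [← Module.End.mul_apply, ← pow_succ, pow_succ', Module.End.mul_apply]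

private lemma nij_one_k (mul : g →ₗ[K] g →ₗ[K] g) (N : Module.End K g)
    (hN : IsNijenhuis mul N) :
    ∀ k : ℕ, ∀ x y : g,
      mul (N x) (N ((N ^ k) y)) - N ((N ^ k) (mul (N x) y))
        - N (mul x (N ((N ^ k) y))) + N (N ((N ^ k) (mul x y))) = 0 := by
  intro k
  induction k with
  | zero => intro x y; simpa using nij_key mul N hN x y
  | succ k ih =>
    intro x y
    have h1 := nij_key mul N hN x (N ((N ^ k) y))
    have h2 := congrArg N (ih x y)
    simp only [map_add, map_sub, map_zero] at h2
    simp only [pow_succ_apply]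
    linear_combination (norm := module) h1 + h2

private lemma nij_jk (mul : g →ₗ[K] g →ₗ[K] g) (N : Module.End K g)
    (hN : IsNijenhuis mul N) :
    ∀ j k : ℕ, ∀ x y : g,
      mul (N ((N ^ j) x)) (N ((N ^ k) y)) - N ((N ^ k) (mul (N ((N ^ j) x)) y))
        - N ((N ^ j) (mul x (N ((N ^ k) y))))
        + N (N ((N ^ j) ((N ^ k) (mul x y)))) = 0 := by
  intro j
  induction j with
  | zero => intro k x y; simpa using nij_one_k mul N hN k x y
  | succ j ih =>
    intro k x y
    have h1 := nij_one_k mul N hN k (N ((N ^ j) x)) y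
    have h2 := congrArg N (ih k x y)
    simp only [map_add, map_sub, map_zero] at h2
    simp only [pow_succ_apply]
    linear_combination (norm := module) h1 + h2

private lemma zpow_succ_apply (u : (Module.End K g)ˣ) (i : ℤ) (z : g) :
    ((u ^ (i + 1) : (Module.End K g)ˣ) : Module.End K g) z
      = (u : Module.End K g) (((u ^ i : (Module.End K g)ˣ) : Module.End K g) z) := by
  rw [show i + 1 = 1 + i by ring, zpow_add, zpow_one, Units.val_mul, Module.End.mul_apply]

private lemma u_inj (u : (Module.End K g)ˣ) {a b : g}
    (h : (u : Module.End K g) a = (u : Module.End K g) b) : a = b := by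
  have := congrArg (fun z => ((u⁻¹ : (Module.End K g)ˣ) : Module.End K g) z) h
  simpa [← Module.End.mul_apply, ← Units.val_mul] using this

private lemma nij_one_k_int (mul : g →ₗ[K] g →ₗ[K] g) (u : (Module.End K g)ˣ)
    (hN : IsNijenhuis mul (u : Module.End K g)) :
    ∀ k : ℤ, ∀ x y : g,
      mul ((u : Module.End K g) x) (((u ^ k : (Module.End K g)ˣ) : Module.End K g) y)
        - ((u ^ k : (Module.End K g)ˣ) : Module.End K g) (mul ((u : Module.End K g) x) y)
        - (u : Module.End K g) (mul x (((u ^ k : (Module.End K g)ˣ) : Module.End K g) y))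
        + (u : Module.End K g) (((u ^ k : (Module.End K g)ˣ) : Module.End K g) (mul x y))
        = 0 := by
  set N := (u : Module.End K g) with hNdef
  have key := nij_key mul N hN
  intro k
  induction k using Int.induction_on with
  | zero => intro x y; simp
  | succ k ih =>
    intro x y
    have h1 := key x (((u ^ (k : ℤ) : (Module.End K g)ˣ) : Module.End K g) y)
    have h2 := congrArg N (ih x y)
    simp only [map_add, map_sub, map_zero] at h2
    simp only [zpow_succ_apply, ← hNdef]
    linear_combination (norm := module) h1 + h2
  | pred k ih =>
    intro x y
    apply u_inj u
    have h1 := key x (((u ^ (-(k : ℤ) - 1) : (Module.End K g)ˣ) : Module.End K g) y)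
    have h2 := ih x y
    rw [show (-(k : ℤ)) = (-(k : ℤ) - 1) + 1 by ring] at h2
    simp only [zpow_succ_apply, ← hNdef] at h2
    simp only [map_add, map_sub, map_zero, ← hNdef]
    linear_combination (norm := module) h2 - h1

private lemma nij_jk_int (mul : g →ₗ[K] g →ₗ[K] g) (u : (Module.End K g)ˣ)
    (hN : IsNijenhuis mul (u : Module.End K g)) :
    ∀ j k : ℤ, ∀ x y : g,
      mul (((u ^ j : (Module.End K g)ˣ) : Module.End K g) x)
          (((u ^ k : (Module.End K g)ˣ) : Module.End K g) y)
        - ((u ^ k : (Module.End K g)ˣ) : Module.End K g)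
            (mul (((u ^ j : (Module.End K g)ˣ) : Module.End K g) x) y)
        - ((u ^ j : (Module.End K g)ˣ) : Module.End K g)
            (mul x (((u ^ k : (Module.End K g)ˣ) : Module.End K g) y))
        + ((u ^ j : (Module.End K g)ˣ) : Module.End K g)
            (((u ^ k : (Module.End K g)ˣ) : Module.End K g) (mul x y)) = 0 := by
  set N := (u : Module.End K g) with hNdef
  have hone := nij_one_k_int mul u hN
  intro j
  induction j using Int.induction_on with
  | zero => intro k x y; simp
  | succ j ih =>
    intro k x y
    have h1 := hone k (((u ^ (j : ℤ) : (Module.End K g)ˣ) : Module.End K g) x) y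
    have h2 := congrArg N (ih k x y)
    simp only [map_add, map_sub, map_zero] at h2
    simp only [zpow_succ_apply, ← hNdef]
    linear_combination (norm := module) h1 + h2
  | pred j ih =>
    intro k x y
    apply u_inj u
    have h1 := hone k (((u ^ (-(j : ℤ) - 1) : (Module.End K g)ˣ) : Module.End K g) x) y
    have h2 := ih k x y
    rw [show (-(j : ℤ)) = (-(j : ℤ) - 1) + 1 by ring] at h2
    simp only [zpow_succ_apply, ← hNdef] at h2
    simp only [map_add, map_sub, map_zero, ← hNdef]
    linear_combination (norm := module) h2 - h1

/-- For a Nijenhuis operator `N` on a pre-Lie algebra we have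
`N^j(x)·N^k(y) − N^k(N^j(x)·y) − N^j(x·N^k(y)) + N^{j+k}(x·y) = 0` for all positive `j,k`;
if `N` is invertible the identity holds for all integers `j,k`. -/
theorem nijenhuis_power_identity
    (mul : g →ₗ[K] g →ₗ[K] g) (hmul : IsPreLie mul) (N : Module.End K g)
    (hN : IsNijenhuis mul N) :
    (∀ j k : ℕ, 0 < j → 0 < k → ∀ x y : g,
      mul ((N ^ j) x) ((N ^ k) y) - (N ^ k) (mul ((N ^ j) x) y)
        - (N ^ j) (mul x ((N ^ k) y)) + (N ^ (j + k)) (mul x y) = 0) ∧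
    (∀ u : (Module.End K g)ˣ, (u : Module.End K g) = N →
      ∀ j k : ℤ, ∀ x y : g,
        mul (((u ^ j : (Module.End K g)ˣ) : Module.End K g) x)
            (((u ^ k : (Module.End K g)ˣ) : Module.End K g) y)
          - ((u ^ k : (Module.End K g)ˣ) : Module.End K g)
              (mul (((u ^ j : (Module.End K g)ˣ) : Module.End K g) x) y)
          - ((u ^ j : (Module.End K g)ˣ) : Module.End K g)
              (mul x (((u ^ k : (Module.End K g)ˣ) : Module.End K g) y))
          + ((u ^ (j + k) : (Module.End K g)ˣ) : Module.End K g) (mul x y) = 0) := by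
  constructor
  · intro j k hj hk x y
    obtain ⟨j, rfl⟩ : ∃ j', j = j' + 1 := ⟨j - 1, (Nat.succ_pred_eq_of_pos hj).symm⟩
    obtain ⟨k, rfl⟩ : ∃ k', k = k' + 1 := ⟨k - 1, (Nat.succ_pred_eq_of_pos hk).symm⟩
    have h := nij_jk mul N hN j k x y
    have e : (N ^ (j + 1 + (k + 1))) (mul x y)
        = N (N ((N ^ j) ((N ^ k) (mul x y)))) := by
      rw [show j + 1 + (k + 1) = j + k + 1 + 1 by ring, pow_succ_apply, pow_succ_apply,
        pow_add, Module.End.mul_apply]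
    rw [e]
    simp only [pow_succ_apply]
    exact h
  · intro u hu j k x y
    subst hu
    have h := nij_jk_int mul u hN j k x y
    have e : ((u ^ (j + k) : (Module.End K g)ˣ) : Module.End K g) (mul x y)
        = ((u ^ j : (Module.End K g)ˣ) : Module.End K g)
            (((u ^ k : (Module.End K g)ˣ) : Module.End K g) (mul x y)) := by
      rw [zpow_add, Units.val_mul, Module.End.mul_apply]
    rw [e]
    exact h
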